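/- arXiv:1403.2310 — 5 statements merged into one kernel-verified Lean document; each statement's English description precedes it below -/
import Mathlib

section
/- Let q ≥ 1, λ ≥ 0, w ≥ 0, h < 0, and fix vectors g, β⁰ ∈ ℝ^q. Define d = g − hβ⁰ and define β̄ ∈ ℝ^q by: β̄ = 0 if ‖d‖₂ ≤ λw, and β̄ = −(1/h)(d − λw·d/‖d‖₂) otherwise. Then β̄ is a global minimizer of Q over ℝ^q, i.e., Q(β̄) ≤ Q(β) for all β ∈ ℝ^q. (Proposition 1 of the paper.) -/
open scoped RealInnerProductSpace

/-- Proposition 1: the closed-form group-soft-thresholding update minimizes the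
penalized quadratic approximation `Q`. -/
theorem stmt_0 (q : ℕ) (hq : 1 ≤ q) (lam w h : ℝ)
    (hlam : 0 ≤ lam) (hw : 0 ≤ w) (hh : h < 0)
    (g β0 : EuclideanSpace ℝ (Fin q)) :
    let Q : EuclideanSpace ℝ (Fin q) → ℝ := fun β =>
      -(⟪β - β0, g⟫ + (h / 2) * ‖β - β0‖ ^ 2) + lam * w * ‖β‖
    let d : EuclideanSpace ℝ (Fin q) := g - h • β0
    let βbar : EuclideanSpace ℝ (Fin q) :=
      if ‖d‖ ≤ lam * w then 0
      else (-(1 / h)) • (d - ((lam * w) / ‖d‖) • d)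
    ∀ β, Q βbar ≤ Q β := by
  intro Q d βbar β
  have hc : (0:ℝ) < -h := by linarith
  -- rewrite Q in terms of f(x) = (-h/2)‖x‖² - ⟪x,d⟫ + λw‖x‖ + K
  have hQ : ∀ x : EuclideanSpace ℝ (Fin q),
      Q x = (-h/2) * ‖x‖^2 - ⟪x, d⟫ + lam * w * ‖x‖
              + (⟪β0, g⟫ + (h/2) * ‖β0‖^2 - h * ⟪β0, β0⟫) := by
    intro x
    have h1 : ⟪x - β0, g⟫ = ⟪x, g⟫ - ⟪β0, g⟫ := inner_sub_left x β0 g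
    have h2 : ‖x - β0‖^2 = ‖x‖^2 - 2 * ⟪x, β0⟫ + ‖β0‖^2 := norm_sub_sq_real x β0
    have h3 : ⟪x, d⟫ = ⟪x, g⟫ - h * ⟪x, β0⟫ := by
      simp only [d, inner_sub_right, real_inner_smul_right]
    have h4 : ⟪β0, β0⟫ = ‖β0‖^2 := real_inner_self_eq_norm_sq β0
    simp only [Q, h1, h2, h3, h4]
    ring
  rw [hQ, hQ]
  have key : (-h/2) * ‖βbar‖^2 - ⟪βbar, d⟫ + lam * w * ‖βbar‖
      ≤ (-h/2) * ‖β‖^2 - ⟪β, d⟫ + lam * w * ‖β‖ := by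
    have hcs : ⟪β, d⟫ ≤ ‖β‖ * ‖d‖ := real_inner_le_norm β d
    have hβn : (0:ℝ) ≤ ‖β‖ := norm_nonneg β
    by_cases hdle : ‖d‖ ≤ lam * w
    · have hβbar : βbar = 0 := if_pos hdle
      rw [hβbar]
      simp only [norm_zero, inner_zero_left]
      nlinarith [sq_nonneg ‖β‖]
    · have hβbar : βbar = ((-(1/h)) * (1 - (lam*w)/‖d‖)) • d := by
        have h0 : βbar = (-(1 / h)) • (d - ((lam * w) / ‖d‖) • d) := if_neg hdle
        rw [h0]
        rw [show d - ((lam * w) / ‖d‖) • d = (1 - (lam*w)/‖d‖) • d by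
          rw [sub_smul, one_smul], smul_smul]
      push_neg at hdle
      have hr : (0:ℝ) < ‖d‖ := lt_of_le_of_lt (mul_nonneg hlam hw) hdle
      set t : ℝ := (-(1/h)) * (1 - (lam*w)/‖d‖) with ht
      have hts : t * (-h) * ‖d‖ = ‖d‖ - lam * w := by
        have hne : h ≠ 0 := ne_of_lt hh
        have hdne : ‖d‖ ≠ 0 := ne_of_gt hr
        rw [ht]
        field_simp
      have htpos : 0 ≤ t := by
        have h1 : 0 < 1 - (lam*w)/‖d‖ := by
          rw [sub_pos, div_lt_one hr]; exact hdle
        have h2 : 0 < -(1/h) := by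
          rw [← one_div_neg_eq_neg_one_div]
          exact div_pos one_pos hc
        positivity
      have hnorm : ‖βbar‖ = t * ‖d‖ := by
        rw [hβbar, norm_smul, Real.norm_eq_abs, abs_of_nonneg htpos]
      have hinner : ⟪βbar, d⟫ = t * ‖d‖^2 := by
        rw [hβbar, real_inner_smul_left, real_inner_self_eq_norm_sq]
      rw [hnorm, hinner]
      nlinarith [sq_nonneg ((-h) * ‖β‖ - (‖d‖ - lam * w)), mul_pos hc hr,
        mul_nonneg (mul_nonneg htpos hc.le) hr.le]
  linarith
end

section
/- Let q ≥ 1, λ ≥ 0, w ≥ 0, h < 0, and fix vectors g, β⁰ ∈ ℝ^q. Let β̄ be a global minimizer of Q over ℝ^q, let s = β̄ − β⁰, and define Δ = −⟨s, g⟩ + λw‖β̄‖₂ − λw‖β⁰‖₂. Then Δ ≤ (h/2)‖s‖₂²; in particular, if β̄ ≠ β⁰ then Δ < 0 (so s is a descent direction for the linearized objective, which guarantees sufficient descent in the paper's Armijo line search). -/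
open scoped RealInnerProductSpace

/-- The minimizer of the penalized quadratic approximation yields a descent
direction for the linearized objective: `Δ ≤ (h/2)‖s‖₂²`, and `Δ < 0` if
`β̄ ≠ β⁰`. -/
theorem stmt_3 (q : ℕ) (hq : 1 ≤ q) (lam w h : ℝ)
    (hlam : 0 ≤ lam) (hw : 0 ≤ w) (hh : h < 0)
    (g β0 βbar : EuclideanSpace ℝ (Fin q))
    (hmin : ∀ β : EuclideanSpace ℝ (Fin q),
      (-(⟪βbar - β0, g⟫ + (h / 2) * ‖βbar - β0‖ ^ 2) + lam * w * ‖βbar‖)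
        ≤ -(⟪β - β0, g⟫ + (h / 2) * ‖β - β0‖ ^ 2) + lam * w * ‖β‖) :
    let s : EuclideanSpace ℝ (Fin q) := βbar - β0
    let Δ : ℝ := -⟪s, g⟫ + lam * w * ‖βbar‖ - lam * w * ‖β0‖
    Δ ≤ (h / 2) * ‖s‖ ^ 2 ∧ (βbar ≠ β0 → Δ < 0) := by
  intro s Δ
  have h0 := hmin β0
  simp only [sub_self, inner_zero_left, norm_zero] at h0
  have hkey : Δ ≤ (h / 2) * ‖s‖ ^ 2 := by
    simp only [Δ, s]
    nlinarith [h0]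
  refine ⟨hkey, fun hne => ?_⟩
  have hs : s ≠ 0 := sub_ne_zero.mpr hne
  have hpos : (0:ℝ) < ‖s‖ ^ 2 := pow_pos (norm_pos_iff.mpr hs) 2
  have hneg : h / 2 * ‖s‖ ^ 2 < 0 := mul_neg_of_neg_of_pos (by linarith) hpos
  exact hkey.trans_lt hneg
end

section
/- Let ℓ : ℝ^q → ℝ be differentiable at β⁰ ∈ ℝ^q with gradient g = ∇ℓ(β⁰), let λ ≥ 0, w ≥ 0, and define f(β) = −ℓ(β) + λw‖β‖₂. Fix h < 0, let β̄ be a global minimizer of the penalized quadratic approximation Q, suppose s = β̄ − β⁰ ≠ 0, and set Δ = −⟨s, g⟩ + λw‖β̄‖₂ − λw‖β⁰‖₂. Then for every δ ∈ (0,1) there exists ᾱ ∈ (0,1] such that for all α ∈ (0, ᾱ], f(β⁰ + αs) − f(β⁰) ≤ α δ Δ. (Hence the Armijo line search used in the paper's coordinate descent step always terminates with a step size achieving sufficient decrease.) -/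
open scoped RealInnerProductSpace

/-- The Armijo line search terminates: for every `δ ∈ (0,1)` there is a
threshold `ᾱ ∈ (0,1]` such that every step size `α ∈ (0, ᾱ]` achieves the
sufficient decrease `f(β⁰ + αs) − f(β⁰) ≤ αδΔ`. -/
theorem stmt_4 (q : ℕ) (hq : 1 ≤ q) (lam w h : ℝ)
    (hlam : 0 ≤ lam) (hw : 0 ≤ w) (hh : h < 0)
    (l : EuclideanSpace ℝ (Fin q) → ℝ)
    (g β0 βbar : EuclideanSpace ℝ (Fin q))
    (hgrad : HasGradientAt l g β0)
    (hmin : ∀ β : EuclideanSpace ℝ (Fin q),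
      (-(⟪βbar - β0, g⟫ + (h / 2) * ‖βbar - β0‖ ^ 2) + lam * w * ‖βbar‖)
        ≤ -(⟪β - β0, g⟫ + (h / 2) * ‖β - β0‖ ^ 2) + lam * w * ‖β‖)
    (hs : βbar - β0 ≠ 0) :
    let f : EuclideanSpace ℝ (Fin q) → ℝ := fun β => -l β + lam * w * ‖β‖
    let s : EuclideanSpace ℝ (Fin q) := βbar - β0
    let Δ : ℝ := -⟪s, g⟫ + lam * w * ‖βbar‖ - lam * w * ‖β0‖
    ∀ δ ∈ Set.Ioo (0 : ℝ) 1, ∃ abar ∈ Set.Ioc (0 : ℝ) 1,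
      ∀ a ∈ Set.Ioc (0 : ℝ) abar, f (β0 + a • s) - f β0 ≤ a * δ * Δ := by
  intro f s Δ δ hδ
  obtain ⟨hδ0, hδ1⟩ := hδ
  -- Δ is negative
  have hsnorm : 0 < ‖s‖ := norm_pos_iff.mpr hs
  have hΔneg : Δ < 0 := by
    have h0 := hmin β0
    simp only [sub_self, inner_zero_left, norm_zero] at h0
    have hsq : 0 < ‖s‖ ^ 2 := by positivity
    show -⟪s, g⟫ + lam * w * ‖βbar‖ - lam * w * ‖β0‖ < 0
    nlinarith [h0]
  set c : ℝ := (1 - δ) * (-Δ) with hc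
  have hcpos : 0 < c := by
    have : 0 < -Δ := by linarith
    have : 0 < 1 - δ := by linarith
    positivity
  -- derivative of a ↦ l (β0 + a • s) at 0 is ⟪s, g⟫
  have hline : HasDerivAt (fun a : ℝ => β0 + a • s) s 0 := by
    simpa using ((hasDerivAt_id (0 : ℝ)).smul_const s).const_add β0
  have hderiv : HasDerivAt (fun a : ℝ => l (β0 + a • s)) ⟪s, g⟫ 0 := by
    have hfd := hgrad.hasFDerivAt
    have h0 : β0 + (0 : ℝ) • s = β0 := by simp
    rw [← h0] at hfd
    have := hfd.comp_hasDerivAt (0 : ℝ) hline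
    simpa [InnerProductSpace.toDual_apply_apply, Function.comp_def, real_inner_comm, mul_comm] using this
  rw [hasDerivAt_iff_tendsto_slope] at hderiv
  rw [Metric.tendsto_nhdsWithin_nhds] at hderiv
  obtain ⟨ε, hε, hball⟩ := hderiv c hcpos
  refine ⟨min (ε / 2) 1, ⟨by positivity, min_le_right _ _⟩, ?_⟩
  intro a ⟨ha0, ha1⟩
  have haε : a < ε := lt_of_le_of_lt (ha1.trans (min_le_left _ _)) (by linarith)
  have ha1' : a ≤ 1 := ha1.trans (min_le_right _ _)
  have hd := hball (x := a) (by simp [ne_of_gt ha0]) (by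
    simp [Real.dist_eq, abs_of_pos ha0, haε])
  rw [Real.dist_eq] at hd
  have hslope : slope (fun a : ℝ => l (β0 + a • s)) 0 a
      = (l (β0 + a • s) - l β0) / a := by
    simp [slope_def_field]
  rw [hslope] at hd
  have habs := abs_lt.mp hd
  have hlb : a * (⟪s, g⟫ - c) ≤ l (β0 + a • s) - l β0 := by
    have h1 : ⟪s, g⟫ - c < (l (β0 + a • s) - l β0) / a := by linarith [habs.1]
    calc a * (⟪s, g⟫ - c) ≤ a * ((l (β0 + a • s) - l β0) / a) :=
          mul_le_mul_of_nonneg_left h1.le ha0.le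
      _ = l (β0 + a • s) - l β0 := by field_simp
  -- convexity of the norm
  have hnorm : ‖β0 + a • s‖ ≤ (1 - a) * ‖β0‖ + a * ‖βbar‖ := by
    have hrw : β0 + a • s = (1 - a) • β0 + a • βbar := by
      simp only [s]
      module
    rw [hrw]
    calc ‖(1 - a) • β0 + a • βbar‖ ≤ ‖(1 - a) • β0‖ + ‖a • βbar‖ := norm_add_le _ _
      _ = (1 - a) * ‖β0‖ + a * ‖βbar‖ := by
          rw [norm_smul, norm_smul, Real.norm_eq_abs, Real.norm_eq_abs,
            abs_of_nonneg (by linarith), abs_of_pos ha0]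
  -- combine
  show -l (β0 + a • s) + lam * w * ‖β0 + a • s‖ - (-l β0 + lam * w * ‖β0‖) ≤ a * δ * Δ
  have hlw : lam * w * ‖β0 + a • s‖ - lam * w * ‖β0‖ ≤ a * (lam * w * ‖βbar‖ - lam * w * ‖β0‖) := by
    nlinarith [mul_nonneg hlam hw]
  have hΔdef : Δ = -⟪s, g⟫ + lam * w * ‖βbar‖ - lam * w * ‖β0‖ := rfl
  nlinarith [hlb, hlw]
end

section
/- Consider the product space ℝ^{d₀} × ∏_{g=1}^{G} ℝ^{d_g}, write a point as β = (β₀, β₁, …, β_G), and let ℓ be a concave differentiable function on this space. Let λ ≥ 0 and w_1, …, w_G ≥ 0, and define f(β) = −ℓ(β) + λ Σ_{g=1}^{G} w_g ‖β_g‖₂. Suppose β* is a point with β*_g = 0 for all g = 1, …, G such that the partial gradient of ℓ with respect to the β₀-block vanishes at β* and ‖∇_{β_g} ℓ(β*)‖₂ ≤ λ w_g for every g = 1, …, G. Then β* is a global minimizer of f. -/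
open scoped RealInnerProductSpace

lemma concave_grad_ineq {E : Type*} [NormedAddCommGroup E] [NormedSpace ℝ E]
    {l : E → ℝ} (hconc : ConcaveOn ℝ Set.univ l) (hdiff : Differentiable ℝ l)
    (x y : E) : l y ≤ l x + fderiv ℝ l x (y - x) := by
  set g : ℝ → ℝ := fun t => l (x + t • (y - x)) with hgdef
  have hline : ∀ t : ℝ, HasDerivAt (fun s : ℝ => x + s • (y - x)) (y - x) t := by
    intro t
    simpa using ((hasDerivAt_id t).smul_const (y - x)).const_add x
  have hgderiv : ∀ t : ℝ, HasDerivAt g (fderiv ℝ l (x + t • (y - x)) (y - x)) t := by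
    intro t
    exact (hdiff _).hasFDerivAt.comp_hasDerivAt t (hline t)
  have hgconc : ConvexOn ℝ Set.univ (fun t => -g t) := by
    have := hconc.neg
    have hcomp : ConvexOn ℝ (AffineMap.lineMap x y ⁻¹' Set.univ)
        ((fun z => -l z) ∘ (AffineMap.lineMap x y : ℝ →ᵃ[ℝ] E)) :=
      this.comp_affineMap _
    have : ConvexOn ℝ Set.univ ((fun z => -l z) ∘ (AffineMap.lineMap x y : ℝ →ᵃ[ℝ] E)) := by
      simpa using hcomp
    convert this using 2 with t
    simp [hgdef, AffineMap.lineMap_apply, add_comm]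
  have hslope := hgconc.le_slope_of_hasDerivAt (Set.mem_univ (0:ℝ)) (Set.mem_univ (1:ℝ))
    one_pos ((hgderiv 0).neg)
  have h01 : slope (fun t => -g t) 0 1 = g 0 - g 1 := by
    simp [slope_def_field]
    ring
  rw [h01] at hslope
  have hg0 : g 0 = l x := by simp [hgdef]
  have hg1 : g 1 = l y := by simp [hgdef]
  have : -(fderiv ℝ l (x + (0:ℝ) • (y - x)) (y - x)) ≤ g 0 - g 1 := hslope
  simp only [zero_smul, add_zero] at this
  linarith [this, hg0 ▸ hg1 ▸ this]

/-- Groupwise KKT condition: if all penalized groups of `β*` vanish, the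
partial gradient in the unpenalized block vanishes, and each groupwise partial
gradient has norm at most `λ w_g`, then `β*` globally minimizes the
group-Lasso-penalized objective. -/
theorem stmt_5 (d0 G : ℕ) (dg : Fin G → ℕ) (lam : ℝ) (hlam : 0 ≤ lam)
    (w : Fin G → ℝ) (hw : ∀ g, 0 ≤ w g)
    (l : EuclideanSpace ℝ (Fin d0) × ((g : Fin G) → EuclideanSpace ℝ (Fin (dg g))) → ℝ)
    (hconc : ConcaveOn ℝ Set.univ l) (hdiff : Differentiable ℝ l)
    (βstar : EuclideanSpace ℝ (Fin d0) × ((g : Fin G) → EuclideanSpace ℝ (Fin (dg g))))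
    (hzero : ∀ g, βstar.2 g = 0)
    (h0 : ∀ v : EuclideanSpace ℝ (Fin d0), fderiv ℝ l βstar (v, 0) = 0)
    (hg : ∀ g : Fin G, ∃ Gg : EuclideanSpace ℝ (Fin (dg g)),
      (∀ v : EuclideanSpace ℝ (Fin (dg g)),
        fderiv ℝ l βstar (0, Pi.single g v) = ⟪Gg, v⟫) ∧ ‖Gg‖ ≤ lam * w g) :
    let f : EuclideanSpace ℝ (Fin d0) × ((g : Fin G) → EuclideanSpace ℝ (Fin (dg g))) → ℝ :=
      fun β => -l β + lam * ∑ g, w g * ‖β.2 g‖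
    ∀ β, f βstar ≤ f β := by
  intro f β
  set D := fderiv ℝ l βstar with hD
  have hzero2 : βstar.2 = 0 := funext hzero
  have hgrad : l β ≤ l βstar + D (β - βstar) := concave_grad_ineq hconc hdiff βstar β
  -- decompose the increment
  have hsub : β - βstar = (β.1 - βstar.1, (0 : (g : Fin G) → EuclideanSpace ℝ (Fin (dg g))))
      + ((0 : EuclideanSpace ℝ (Fin d0)), β.2) := by
    ext <;> simp [hzero2]
  have hsnd : ((0 : EuclideanSpace ℝ (Fin d0)), β.2)
      = ∑ g, ((0 : EuclideanSpace ℝ (Fin d0)), Pi.single g (β.2 g)) := by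
    ext
    · simp [Prod.fst_sum]
    · simp [Prod.snd_sum, Finset.univ_sum_single]
  have hDval : D (β - βstar) = ∑ g, D (0, Pi.single g (β.2 g)) := by
    rw [hsub, map_add, h0, hsnd, map_sum, zero_add]
  have hterm : ∀ g, D (0, Pi.single g (β.2 g)) ≤ lam * w g * ‖β.2 g‖ := by
    intro g
    obtain ⟨Gg, hGg1, hGg2⟩ := hg g
    rw [hGg1]
    calc ⟪Gg, β.2 g⟫ ≤ ‖Gg‖ * ‖β.2 g‖ := real_inner_le_norm _ _
      _ ≤ lam * w g * ‖β.2 g‖ := by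
        exact mul_le_mul_of_nonneg_right hGg2 (norm_nonneg _)
  have hsum : D (β - βstar) ≤ lam * ∑ g, w g * ‖β.2 g‖ := by
    rw [hDval, Finset.mul_sum]
    apply Finset.sum_le_sum
    intro g _
    simpa [mul_assoc] using hterm g
  have hzsum : ∑ g, w g * ‖βstar.2 g‖ = 0 := by simp [hzero]
  have : l β ≤ l βstar + lam * ∑ g, w g * ‖β.2 g‖ := hgrad.trans (by linarith)
  simp only [f]
  rw [hzsum]
  linarith
end

section
/- In the discrete Bayesian network multi-logit setup, let φ and φ* be parameters satisfying the identifiability constraints whose induced graphs G_φ and G_{φ*} are acyclic, and suppose φ* is natural. If p(x | φ_{[k]}) = p(x | φ*_{[k]}) for every configuration x ∈ ∏_{i=1}^{p} {1,…,r_i} and every k = 1,…,p, then φ = φ*. (First claim of Theorem 1: identifiability of the causal discrete Bayesian network from single-node interventional distributions.) -/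
namespace Stmt17Aux
variable {p : ℕ} {r : Fin p → ℕ}

noncomputable def eta (bb : (j : Fin p) → Fin (r j) → ℝ)
    (ββ : (j : Fin p) → Fin (r j) → (i : Fin p) → Fin (r i - 1) → ℝ)
    (j : Fin p) (m : Fin (r j)) (x : (i : Fin p) → Fin (r i)) : ℝ :=
  bb j m + ∑ i ∈ Finset.univ.erase j, ∑ t : Fin (r i - 1),
    (if (t : ℕ) + 1 = (x i : ℕ) then (1 : ℝ) else 0) * ββ j m i t

noncomputable def cond (bb : (j : Fin p) → Fin (r j) → ℝ)
    (ββ : (j : Fin p) → Fin (r j) → (i : Fin p) → Fin (r i - 1) → ℝ)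
    (j : Fin p) (x : (i : Fin p) → Fin (r i)) : ℝ :=
  Real.exp (eta bb ββ j (x j) x) / ∑ m, Real.exp (eta bb ββ j m x)

variable {bb : (j : Fin p) → Fin (r j) → ℝ}
  {ββ ββ' : (j : Fin p) → Fin (r j) → (i : Fin p) → Fin (r i - 1) → ℝ}

lemma sum_exp_pos {j : Fin p} (hrj : 0 < r j) (x : (i : Fin p) → Fin (r i)) :
    0 < ∑ m, Real.exp (eta bb ββ j m x) := by
  haveI : Nonempty (Fin (r j)) := Fin.pos_iff_nonempty.mp hrj
  exact Finset.sum_pos (fun m _ => Real.exp_pos _) Finset.univ_nonempty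

lemma cond_pos {j : Fin p} (hrj : 0 < r j) (x : (i : Fin p) → Fin (r i)) :
    0 < cond bb ββ j x :=
  div_pos (Real.exp_pos _) (sum_exp_pos hrj x)

lemma eta_update_self {j : Fin p} (m : Fin (r j)) (x : (i : Fin p) → Fin (r i))
    (a : Fin (r j)) :
    eta bb ββ j m (Function.update x j a) = eta bb ββ j m x := by
  unfold eta
  congr 1
  refine Finset.sum_congr rfl fun i hi => ?_
  rw [Function.update_of_ne (Finset.mem_erase.mp hi).1]

lemma sum_cond {j : Fin p} (hrj : 0 < r j) (x : (i : Fin p) → Fin (r i)) :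
    ∑ a : Fin (r j), cond bb ββ j (Function.update x j a) = 1 := by
  have h : ∀ a : Fin (r j), cond bb ββ j (Function.update x j a)
      = Real.exp (eta bb ββ j a x) / ∑ m, Real.exp (eta bb ββ j m x) := by
    intro a
    unfold cond
    rw [Function.update_self]
    simp only [eta_update_self]
  rw [Finset.sum_congr rfl fun a _ => h a, ← Finset.sum_div]
  exact div_self (ne_of_gt (sum_exp_pos hrj x))

lemma eta_indep {j j' : Fin p} (hz : ∀ l t, ββ j' l j t = 0)
    (m : Fin (r j')) (x : (i : Fin p) → Fin (r i)) (a : Fin (r j)) :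
    eta bb ββ j' m (Function.update x j a) = eta bb ββ j' m x := by
  unfold eta
  congr 1
  refine Finset.sum_congr rfl fun i _ => ?_
  by_cases h : i = j
  · subst h; simp [hz]
  · rw [Function.update_of_ne h]

lemma cond_indep {j j' : Fin p} (hne : j' ≠ j) (hz : ∀ l t, ββ j' l j t = 0)
    (x : (i : Fin p) → Fin (r i)) (a : Fin (r j)) :
    cond bb ββ j' (Function.update x j a) = cond bb ββ j' x := by
  unfold cond
  rw [Function.update_of_ne hne]
  simp only [eta_indep hz]

lemma eta_congr_row {j : Fin p} (h : ∀ l i t, ββ j l i t = ββ' j l i t)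
    (m : Fin (r j)) (x : (i : Fin p) → Fin (r i)) :
    eta bb ββ j m x = eta bb ββ' j m x := by
  unfold eta
  simp only [h]

lemma cond_congr_row {j : Fin p} (h : ∀ l i t, ββ j l i t = ββ' j l i t)
    (x : (i : Fin p) → Fin (r i)) :
    cond bb ββ j x = cond bb ββ' j x := by
  unfold cond
  simp only [eta_congr_row h]

lemma cond_zero_row {k : Fin p} (hz : ∀ l i t, ββ k l i t = 0)
    (x : (i : Fin p) → Fin (r i)) :
    cond bb ββ k x = Real.exp (bb k (x k)) / ∑ m, Real.exp (bb k m) := by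
  have h : ∀ m, eta bb ββ k m x = bb k m := by
    intro m; unfold eta; simp [hz]
  unfold cond
  simp only [h]

lemma exists_sink (e : Fin p → Fin p → Prop)
    (hac : ∀ v, ¬ Relation.TransGen e v v)
    (S : Finset (Fin p)) (hS : S.Nonempty) :
    ∃ j ∈ S, ∀ j' ∈ S, ¬ e j j' := by
  haveI : IsTrans (Fin p) (flip (Relation.TransGen e)) :=
    ⟨fun a b c hab hbc => Relation.TransGen.trans hbc hab⟩
  haveI : IsIrrefl (Fin p) (flip (Relation.TransGen e)) := ⟨fun a ha => hac a ha⟩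
  obtain ⟨j, hjS, hmin⟩ :=
    (Finite.wellFounded_of_trans_of_irrefl (flip (Relation.TransGen e))).has_min
      (↑S) (Finset.coe_nonempty.mpr hS)
  exact ⟨j, hjS, fun j' hj' he => hmin j' hj' (Relation.TransGen.single he)⟩

lemma sum_split (j : Fin p) (c : Fin (r j)) (g : ((i : Fin p) → Fin (r i)) → ℝ) :
    ∑ y : (i : Fin p) → Fin (r i), g y
      = ∑ a : Fin (r j), ∑ y : (i : Fin p) → Fin (r i),
          if y j = c then g (Function.update y j a) else 0 := by
  have step : ∀ a : Fin (r j),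
      (∑ y : (i : Fin p) → Fin (r i), if y j = c then g (Function.update y j a) else 0)
        = ∑ y : (i : Fin p) → Fin (r i), if y j = a then g y else 0 := by
    intro a
    have hinv : Function.Involutive
        (fun y : (i : Fin p) → Fin (r i) => Function.update y j (Equiv.swap c a (y j))) := by
      intro y
      simp only [Function.update_self, Function.update_idem, Equiv.swap_apply_self]
      exact Function.update_eq_self j y
    refine (Fintype.sum_bijective _ hinv.bijective _ _ fun y => ?_).symm
    by_cases h : y j = a
    · have hσj : Function.update y j (Equiv.swap c a (y j)) j = c := by
        rw [Function.update_self, h, Equiv.swap_apply_right]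
      rw [if_pos h, if_pos hσj, Function.update_idem, ← h, Function.update_eq_self]
    · have hσj : Function.update y j (Equiv.swap c a (y j)) j ≠ c := by
        rw [Function.update_self]
        intro hh
        exact h ((Equiv.swap c a).injective (by rw [hh, Equiv.swap_apply_right]))
      rw [if_neg h, if_neg hσj]
  rw [Finset.sum_congr rfl fun a _ => step a, Finset.sum_comm]
  refine Finset.sum_congr rfl fun y _ => ?_
  simp

lemma norm_sum (hr : ∀ i, 0 < r i)
    (bb : (j : Fin p) → Fin (r j) → ℝ)
    (ββ : (j : Fin p) → Fin (r j) → (i : Fin p) → Fin (r i - 1) → ℝ)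
    (hac : ∀ v, ¬ Relation.TransGen (fun i j => i ≠ j ∧ ∃ l t, ββ j l i t ≠ 0) v v)
    (S : Finset (Fin p)) :
    ∀ x : (i : Fin p) → Fin (r i),
      ∑ y : (i : Fin p) → Fin (r i),
        (if ∀ i ∉ S, y i = x i then ∏ j' ∈ S, cond bb ββ j' y else 0) = 1 := by
  induction S using Finset.strongInduction with
  | _ S ih =>
    intro x
    rcases S.eq_empty_or_nonempty with hS | hS
    · subst hS
      have hiff : ∀ y : (i : Fin p) → Fin (r i),
          (∀ i ∉ (∅ : Finset (Fin p)), y i = x i) ↔ y = x := by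
        intro y; simp [funext_iff]
      simp only [Finset.prod_empty]
      rw [Finset.sum_congr rfl fun y _ => if_congr (hiff y) rfl rfl]
      simp
    · obtain ⟨j, hjS, hsink⟩ := exists_sink _ hac S hS
      have hz : ∀ j' ∈ S, j' ≠ j → ∀ l t, ββ j' l j t = 0 := by
        intro j' hj' hne l t
        by_contra hcon
        exact hsink j' hj' ⟨Ne.symm hne, l, t, hcon⟩
      have key := ih (S.erase j) (Finset.erase_ssubset hjS) x
      rw [sum_split j (x j)
        (fun y => if ∀ i ∉ S, y i = x i then ∏ j' ∈ S, cond bb ββ j' y else 0)]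
      have hterm : ∀ (a : Fin (r j)) (y : (i : Fin p) → Fin (r i)),
          (if y j = x j then
            (if ∀ i ∉ S, Function.update y j a i = x i
              then ∏ j' ∈ S, cond bb ββ j' (Function.update y j a) else 0) else 0)
          = (if ∀ i ∉ S.erase j, y i = x i
              then cond bb ββ j (Function.update y j a)
                * ∏ j' ∈ S.erase j, cond bb ββ j' y else 0) := by
        intro a y
        by_cases h1 : y j = x j
        · rw [if_pos h1]
          have hcnd : (∀ i ∉ S, Function.update y j a i = x i)
              ↔ (∀ i ∉ S.erase j, y i = x i) := by
            constructor
            · intro h i hi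
              by_cases hij : i = j
              · subst hij; exact h1
              · have hiS : i ∉ S := fun hmem =>
                  hi (Finset.mem_erase.mpr ⟨hij, hmem⟩)
                have := h i hiS
                rwa [Function.update_of_ne hij] at this
            · intro h i hi
              have hij : i ≠ j := fun e => (e ▸ hi) hjS
              rw [Function.update_of_ne hij]
              exact h i (fun hmem => hi (Finset.mem_of_mem_erase hmem))
          rw [if_congr hcnd rfl rfl]
          by_cases h2 : ∀ i ∉ S.erase j, y i = x i
          · rw [if_pos h2, if_pos h2, ← Finset.mul_prod_erase S _ hjS]
            congr 1
            refine Finset.prod_congr rfl fun j' hj' => ?_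
            exact cond_indep (Finset.mem_erase.mp hj').1
              (hz j' (Finset.mem_of_mem_erase hj') (Finset.mem_erase.mp hj').1) y a
          · rw [if_neg h2, if_neg h2]
        · rw [if_neg h1]
          have : ¬ (∀ i ∉ S.erase j, y i = x i) := fun h =>
            h1 (h j (Finset.notMem_erase j S))
          rw [if_neg this]
      calc ∑ a : Fin (r j), ∑ y : (i : Fin p) → Fin (r i),
            (if y j = x j then
              (if ∀ i ∉ S, Function.update y j a i = x i
                then ∏ j' ∈ S, cond bb ββ j' (Function.update y j a) else 0) else 0)
          = ∑ y : (i : Fin p) → Fin (r i), ∑ a : Fin (r j),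
            (if ∀ i ∉ S.erase j, y i = x i
              then cond bb ββ j (Function.update y j a)
                * ∏ j' ∈ S.erase j, cond bb ββ j' y else 0) := by
            rw [Finset.sum_comm]
            exact Finset.sum_congr rfl fun y _ =>
              Finset.sum_congr rfl fun a _ => hterm a y
        _ = ∑ y : (i : Fin p) → Fin (r i),
            (if ∀ i ∉ S.erase j, y i = x i
              then ∏ j' ∈ S.erase j, cond bb ββ j' y else 0) := by
            refine Finset.sum_congr rfl fun y _ => ?_
            by_cases h : ∀ i ∉ S.erase j, y i = x i
            · simp only [if_pos h]
              rw [← Finset.sum_mul, sum_cond (hr j) y, one_mul]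
            · rw [if_neg h, Finset.sum_congr rfl fun a _ => if_neg h,
                Finset.sum_const, smul_zero]
        _ = 1 := key

lemma marg (hr : ∀ i, 0 < r i)
    (bb : (j : Fin p) → Fin (r j) → ℝ)
    (ββ : (j : Fin p) → Fin (r j) → (i : Fin p) → Fin (r i - 1) → ℝ)
    (k : Fin p) (hz : ∀ l i t, ββ k l i t = 0)
    (hac : ∀ v, ¬ Relation.TransGen (fun i j => i ≠ j ∧ ∃ l t, ββ j l i t ≠ 0) v v)
    (a : Fin (r k)) :
    ∑ y : (i : Fin p) → Fin (r i), (if y k = a then ∏ j', cond bb ββ j' y else 0)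
      = Real.exp (bb k a) / ∑ m, Real.exp (bb k m) := by
  set x : (i : Fin p) → Fin (r i) := Function.update (fun i => ⟨0, hr i⟩) k a with hx
  have hcnd : ∀ y : (i : Fin p) → Fin (r i),
      (y k = a) ↔ (∀ i ∉ Finset.univ.erase k, y i = x i) := by
    intro y
    constructor
    · intro h i hi
      have hik : i = k := by simpa using hi
      subst hik
      rw [hx, Function.update_self]
      exact h
    · intro h
      have := h k (by simp)
      rwa [hx, Function.update_self] at this
  have hck : ∀ y : (i : Fin p) → Fin (r i), y k = a →
      cond bb ββ k y = Real.exp (bb k a) / ∑ m, Real.exp (bb k m) := by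
    intro y hy
    rw [cond_zero_row hz, hy]
  calc ∑ y : (i : Fin p) → Fin (r i), (if y k = a then ∏ j', cond bb ββ j' y else 0)
      = ∑ y : (i : Fin p) → Fin (r i),
          (Real.exp (bb k a) / ∑ m, Real.exp (bb k m)) *
          (if ∀ i ∉ Finset.univ.erase k, y i = x i
            then ∏ j' ∈ Finset.univ.erase k, cond bb ββ j' y else 0) := by
        refine Finset.sum_congr rfl fun y _ => ?_
        by_cases h : y k = a
        · rw [if_pos h, if_pos ((hcnd y).mp h),
            ← Finset.mul_prod_erase Finset.univ _ (Finset.mem_univ k), hck y h]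
        · rw [if_neg h, if_neg (fun hh => h ((hcnd y).mpr hh)), mul_zero]
    _ = Real.exp (bb k a) / ∑ m, Real.exp (bb k m) := by
        rw [← Finset.mul_sum, norm_sum hr bb ββ hac (Finset.univ.erase k) x, mul_one]

lemma softmax_diff {n : ℕ} (u v : Fin n → ℝ)
    (h : ∀ a, Real.exp (u a) / (∑ m, Real.exp (u m))
      = Real.exp (v a) / (∑ m, Real.exp (v m)))
    (a a' : Fin n) : u a - v a = u a' - v a' := by
  haveI : Nonempty (Fin n) := ⟨a⟩
  have hu : 0 < ∑ m, Real.exp (u m) :=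
    Finset.sum_pos (fun m _ => Real.exp_pos _) Finset.univ_nonempty
  have hv : 0 < ∑ m, Real.exp (v m) :=
    Finset.sum_pos (fun m _ => Real.exp_pos _) Finset.univ_nonempty
  have key : ∀ c : Fin n,
      Real.exp (u c) * ∑ m, Real.exp (v m) = Real.exp (v c) * ∑ m, Real.exp (u m) :=
    fun c => (div_eq_div_iff hu.ne' hv.ne').mp (h c)
  have e1 := key a
  have e2 := key a'
  have e3 : Real.exp (u a) * Real.exp (v a') = Real.exp (v a) * Real.exp (u a') := by
    have h4 : Real.exp (u a) * Real.exp (v a')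
        * ((∑ m, Real.exp (v m)) * (∑ m, Real.exp (u m)))
        = Real.exp (v a) * Real.exp (u a')
        * ((∑ m, Real.exp (v m)) * (∑ m, Real.exp (u m))) := by
      linear_combination (Real.exp (v a') * (∑ m, Real.exp (u m))) * e1
        - (Real.exp (v a) * (∑ m, Real.exp (u m))) * e2
    exact mul_right_cancel₀ (ne_of_gt (mul_pos hv hu)) h4
  rw [← Real.exp_add, ← Real.exp_add] at e3
  have := Real.exp_injective e3
  linarith

end Stmt17Aux

set_option maxHeartbeats 1600000 in
/-- First claim of Theorem 1: identifiability of the causal discrete Bayesian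
network multi-logit model from single-node interventional distributions. If
`φ = (b, β)` and `φ* = (bs, βs)` both satisfy the identifiability constraints,
induce acyclic graphs, `φ*` is natural, and `p(· | φ_[k]) = p(· | φ*_[k])` for
every `k`, then `φ = φ*`. -/
theorem stmt_17 (p : ℕ) (r : Fin p → ℕ) (hr : ∀ i, 2 ≤ r i)
    (b bs : (j : Fin p) → Fin (r j) → ℝ)
    (β βs : (j : Fin p) → Fin (r j) → (i : Fin p) → Fin (r i - 1) → ℝ)
    (hb : ∀ j, b j ⟨0, by have := hr j; omega⟩ = 0)
    (hbs : ∀ j, bs j ⟨0, by have := hr j; omega⟩ = 0)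
    (hβ : ∀ j i t, ∑ l, β j l i t = 0)
    (hβs : ∀ j i t, ∑ l, βs j l i t = 0)
    (hdiag : ∀ j l t, β j l j t = 0)
    (hdiags : ∀ j l t, βs j l j t = 0) :
    let η : ((j : Fin p) → Fin (r j) → ℝ) →
        ((j : Fin p) → Fin (r j) → (i : Fin p) → Fin (r i - 1) → ℝ) →
        (j : Fin p) → Fin (r j) → ((i : Fin p) → Fin (r i)) → ℝ :=
      fun bb ββ j m x =>
        bb j m + ∑ i ∈ Finset.univ.erase j, ∑ t : Fin (r i - 1),
          (if (t : ℕ) + 1 = (x i : ℕ) then (1 : ℝ) else 0) * ββ j m i t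
    let pmf : ((j : Fin p) → Fin (r j) → ℝ) →
        ((j : Fin p) → Fin (r j) → (i : Fin p) → Fin (r i - 1) → ℝ) →
        ((i : Fin p) → Fin (r i)) → ℝ :=
      fun bb ββ x => ∏ j, Real.exp (η bb ββ j (x j) x) / ∑ m, Real.exp (η bb ββ j m x)
    let intervene : ((j : Fin p) → Fin (r j) → (i : Fin p) → Fin (r i - 1) → ℝ) → Fin p →
        ((j : Fin p) → Fin (r j) → (i : Fin p) → Fin (r i - 1) → ℝ) :=
      fun ββ k j l i t => if j = k then 0 else ββ j l i t
    let edge : ((j : Fin p) → Fin (r j) → (i : Fin p) → Fin (r i - 1) → ℝ) →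
        Fin p → Fin p → Prop :=
      fun ββ i j => i ≠ j ∧ ∃ l t, ββ j l i t ≠ 0
    let indep : (((i : Fin p) → Fin (r i)) → ℝ) → Fin p → Fin p → Prop :=
      fun q i j => ∀ (a : Fin (r i)) (c : Fin (r j)),
        (∑ x : (i' : Fin p) → Fin (r i'), if x i = a ∧ x j = c then q x else 0) =
        (∑ x : (i' : Fin p) → Fin (r i'), if x i = a then q x else 0) *
        (∑ x : (i' : Fin p) → Fin (r i'), if x j = c then q x else 0)
    (∀ v, ¬ Relation.TransGen (edge β) v v) →
    (∀ v, ¬ Relation.TransGen (edge βs) v v) →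
    (∀ i j, Relation.TransGen (edge βs) i j → ¬ indep (pmf bs (intervene βs i)) i j) →
    (∀ (k : Fin p) (x : (i : Fin p) → Fin (r i)),
      pmf b (intervene β k) x = pmf bs (intervene βs k) x) →
    b = bs ∧ β = βs := by
  intro η pmf intervene edge indep hac hacs _hnat heq
  classical
  have hr0 : ∀ i, 0 < r i := fun i => by have := hr i; omega
  have heq' : ∀ (k : Fin p) (x : (i : Fin p) → Fin (r i)),
      (∏ j', Stmt17Aux.cond b (fun j l i t => if j = k then 0 else β j l i t) j' x)
        = ∏ j', Stmt17Aux.cond bs (fun j l i t => if j = k then 0 else βs j l i t) j' x :=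
    heq
  have hac' : ∀ v, ¬ Relation.TransGen
      (fun i j : Fin p => i ≠ j ∧ ∃ l t, β j l i t ≠ 0) v v := hac
  have hacs' : ∀ v, ¬ Relation.TransGen
      (fun i j : Fin p => i ≠ j ∧ ∃ l t, βs j l i t ≠ 0) v v := hacs
  clear _hnat heq hac hacs
  clear indep edge intervene pmf η
  have hacI : ∀ (γ : (j : Fin p) → Fin (r j) → (i : Fin p) → Fin (r i - 1) → ℝ),
      (∀ v, ¬ Relation.TransGen (fun i j : Fin p => i ≠ j ∧ ∃ l t, γ j l i t ≠ 0) v v) →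
      ∀ (k : Fin p) (v : Fin p), ¬ Relation.TransGen
        (fun i j : Fin p => i ≠ j ∧ ∃ l t,
          (if j = k then (0:ℝ) else γ j l i t) ≠ 0) v v := by
    intro γ hγ k v hv
    refine hγ v (Relation.TransGen.mono ?_ _ _ hv)
    rintro i j ⟨hij, l, t, hlt⟩
    refine ⟨hij, l, t, ?_⟩
    by_cases h : j = k
    · simp [h] at hlt
    · simpa [h] using hlt
  -- Step A : b = bs
  have hbeq : b = bs := by
    funext k
    have hall : ∀ a : Fin (r k),
        Real.exp (b k a) / (∑ m, Real.exp (b k m))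
          = Real.exp (bs k a) / (∑ m, Real.exp (bs k m)) := by
      intro a
      have h1 := Stmt17Aux.marg hr0 b (fun j l i t => if j = k then 0 else β j l i t) k
        (by intro l i' t'; simp) (hacI β hac' k) a
      have h2 := Stmt17Aux.marg hr0 bs (fun j l i t => if j = k then 0 else βs j l i t) k
        (by intro l i' t'; simp) (hacI βs hacs' k) a
      rw [← h1, ← h2]
      exact Finset.sum_congr rfl fun y _ => by rw [heq' k y]
    funext a
    have a0 : Fin (r k) := ⟨0, by have := hr k; omega⟩
    have hd := Stmt17Aux.softmax_diff (b k) (bs k)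
      hall a (⟨0, by have := hr k; omega⟩ : Fin (r k))
    have hb0 : b k (⟨0, by have := hr k; omega⟩ : Fin (r k)) = 0 := hb k
    have hbs0 : bs k (⟨0, by have := hr k; omega⟩ : Fin (r k)) = 0 := hbs k
    rw [hb0, hbs0] at hd
    linarith
  subst hbeq
  refine ⟨rfl, ?_⟩
  funext j m i t
  by_cases hij : i = j
  · subst hij
    rw [hdiag, hdiags]
  · have hp2 : 2 ≤ p := by
      have h1 : (i : ℕ) ≠ (j : ℕ) := fun h => hij (Fin.ext h)
      have := i.2
      have := j.2
      omega
    -- equality of products over erased index sets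
    have hA : ∀ (k : Fin p) (x : (i' : Fin p) → Fin (r i')),
        ∏ j' ∈ Finset.univ.erase k, Stmt17Aux.cond b β j' x
          = ∏ j' ∈ Finset.univ.erase k, Stmt17Aux.cond b βs j' x := by
      intro k x
      have h1 := heq' k x
      have e1 : (∏ j', Stmt17Aux.cond b (fun j l i t => if j = k then 0 else β j l i t) j' x)
          = (Real.exp (b k (x k)) / ∑ m', Real.exp (b k m'))
            * ∏ j' ∈ Finset.univ.erase k, Stmt17Aux.cond b β j' x := by
        rw [← Finset.mul_prod_erase Finset.univ _ (Finset.mem_univ k)]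
        congr 1
        · exact Stmt17Aux.cond_zero_row (by intro l i' t'; simp) x
        · exact Finset.prod_congr rfl fun j' hj' =>
            Stmt17Aux.cond_congr_row
              (by intro l i' t'; simp [(Finset.mem_erase.mp hj').1]) x
      have e2 : (∏ j', Stmt17Aux.cond b (fun j l i t => if j = k then 0 else βs j l i t) j' x)
          = (Real.exp (b k (x k)) / ∑ m', Real.exp (b k m'))
            * ∏ j' ∈ Finset.univ.erase k, Stmt17Aux.cond b βs j' x := by
        rw [← Finset.mul_prod_erase Finset.univ _ (Finset.mem_univ k)]
        congr 1
        · exact Stmt17Aux.cond_zero_row (by intro l i' t'; simp) x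
        · exact Finset.prod_congr rfl fun j' hj' =>
            Stmt17Aux.cond_congr_row
              (by intro l i' t'; simp [(Finset.mem_erase.mp hj').1]) x
      rw [e1, e2] at h1
      have hpos : (0:ℝ) < Real.exp (b k (x k)) / ∑ m', Real.exp (b k m') := by
        apply div_pos (Real.exp_pos _)
        haveI : Nonempty (Fin (r k)) := Fin.pos_iff_nonempty.mp (hr0 k)
        exact Finset.sum_pos (fun m' _ => Real.exp_pos _) Finset.univ_nonempty
      exact mul_left_cancel₀ (ne_of_gt hpos) h1
    -- equality of all conditionals
    have hcond : ∀ (jj : Fin p) (x : (i' : Fin p) → Fin (r i')),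
        Stmt17Aux.cond b β jj x = Stmt17Aux.cond b βs jj x := by
      intro jj x
      have hp1 : ∀ j' : Fin p, (0:ℝ) < Stmt17Aux.cond b β j' x :=
        fun j' => Stmt17Aux.cond_pos (hr0 j') x
      have hq1 : ∀ j' : Fin p, (0:ℝ) < Stmt17Aux.cond b βs j' x :=
        fun j' => Stmt17Aux.cond_pos (hr0 j') x
      set PP := ∏ j', Stmt17Aux.cond b β j' x with hPP
      set QQ := ∏ j', Stmt17Aux.cond b βs j' x with hQQ
      have hPPpos : 0 < PP := Finset.prod_pos fun j' _ => hp1 j'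
      have hQQpos : 0 < QQ := Finset.prod_pos fun j' _ => hq1 j'
      have key : ∀ k : Fin p,
          Stmt17Aux.cond b βs k x * PP = Stmt17Aux.cond b β k x * QQ := by
        intro k
        rw [hPP, hQQ,
          ← Finset.mul_prod_erase Finset.univ
            (fun j' => Stmt17Aux.cond b β j' x) (Finset.mem_univ k),
          ← Finset.mul_prod_erase Finset.univ
            (fun j' => Stmt17Aux.cond b βs j' x) (Finset.mem_univ k),
          hA k x]
        ring
      have hprod : QQ * PP ^ p = PP * QQ ^ p := by
        have h5 : (∏ k : Fin p, (Stmt17Aux.cond b βs k x * PP))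
            = ∏ k : Fin p, (Stmt17Aux.cond b β k x * QQ) :=
          Finset.prod_congr rfl fun k _ => key k
        rw [Finset.prod_mul_distrib, Finset.prod_mul_distrib, Finset.prod_const,
          Finset.prod_const, Finset.card_univ, Fintype.card_fin, ← hPP, ← hQQ] at h5
        exact h5
      have hne : PP * QQ ≠ 0 := by positivity
      have hpow : PP ^ (p - 1) = QQ ^ (p - 1) := by
        have h7 : PP ^ p = PP ^ (p - 1) * PP := by
          rw [← pow_succ]
          congr 1
          omega
        have h8 : QQ ^ p = QQ ^ (p - 1) * QQ := by
          rw [← pow_succ]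
          congr 1
          omega
        rw [h7, h8] at hprod
        have h6 : PP ^ (p - 1) * (PP * QQ) = QQ ^ (p - 1) * (PP * QQ) := by
          linear_combination hprod
        exact mul_right_cancel₀ hne h6
      have hPQ : PP = QQ := by
        have hp' : p - 1 ≠ 0 := by omega
        rcases lt_trichotomy PP QQ with h | h | h
        · exact absurd hpow (ne_of_lt (pow_lt_pow_left₀ h hPPpos.le hp'))
        · exact h
        · exact absurd hpow.symm (ne_of_lt (pow_lt_pow_left₀ h hQQpos.le hp'))
      have hk := key jj
      rw [hPQ] at hk
      exact (mul_right_cancel₀ hQQpos.ne' hk).symm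
    -- equality of the linear predictors
    have heta : ∀ (m' : Fin (r j)) (x : (i' : Fin p) → Fin (r i')),
        Stmt17Aux.eta b β j m' x = Stmt17Aux.eta b βs j m' x := by
      intro m' x
      have hsm : ∀ a : Fin (r j),
          Real.exp (Stmt17Aux.eta b β j a x)
            / (∑ m'', Real.exp (Stmt17Aux.eta b β j m'' x))
          = Real.exp (Stmt17Aux.eta b βs j a x)
            / (∑ m'', Real.exp (Stmt17Aux.eta b βs j m'' x)) := by
        intro a
        have h6 := hcond j (Function.update x j a)
        unfold Stmt17Aux.cond at h6
        rw [Function.update_self] at h6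
        simpa only [Stmt17Aux.eta_update_self] using h6
      have hdc := Stmt17Aux.softmax_diff
        (fun a => Stmt17Aux.eta b β j a x) (fun a => Stmt17Aux.eta b βs j a x) hsm
      have hzz : ∀ (γ : (j' : Fin p) → Fin (r j') → (i' : Fin p) → Fin (r i' - 1) → ℝ),
          (∀ j' i' t', ∑ l, γ j' l i' t' = 0) →
          ∑ a : Fin (r j), Stmt17Aux.eta b γ j a x = ∑ a : Fin (r j), b j a := by
        intro γ hγ
        unfold Stmt17Aux.eta
        rw [Finset.sum_add_distrib]
        have hzero : ∑ a : Fin (r j), ∑ i' ∈ Finset.univ.erase j, ∑ t' : Fin (r i' - 1),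
            (if (t' : ℕ) + 1 = (x i' : ℕ) then (1:ℝ) else 0) * γ j a i' t' = 0 := by
          rw [Finset.sum_comm]
          refine Finset.sum_eq_zero fun i' _ => ?_
          rw [Finset.sum_comm]
          refine Finset.sum_eq_zero fun t' _ => ?_
          rw [← Finset.mul_sum, hγ j i' t', mul_zero]
        rw [hzero, add_zero]
      have hsum : ∑ a : Fin (r j), Stmt17Aux.eta b β j a x
          = ∑ a : Fin (r j), Stmt17Aux.eta b βs j a x := by
        rw [hzz β hβ, hzz βs hβs]
      have h7 : ∑ a : Fin (r j),
          (Stmt17Aux.eta b β j a x - Stmt17Aux.eta b βs j a x) = 0 := by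
        rw [Finset.sum_sub_distrib, hsum, sub_self]
      rw [Finset.sum_congr rfl (fun a _ => hdc a m'), Finset.sum_const,
        Finset.card_univ, Fintype.card_fin, nsmul_eq_mul] at h7
      have hrj : ((r j : ℝ)) ≠ 0 := Nat.cast_ne_zero.mpr (by have := hr j; omega)
      rcases mul_eq_zero.mp h7 with h | h
      · exact absurd h hrj
      · linarith
    -- extract the coefficient
    have hti : (t : ℕ) + 1 < r i := by have := t.2; have := hr i; omega
    set x : (i' : Fin p) → Fin (r i')
      := Function.update (fun i' => ⟨0, hr0 i'⟩) i ⟨(t : ℕ) + 1, hti⟩ with hx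
    have h9 := heta m x
    unfold Stmt17Aux.eta at h9
    have h10 := add_left_cancel h9
    have hxi : (x i : ℕ) = (t : ℕ) + 1 := by rw [hx, Function.update_self]
    have heval : ∀ (γ : (j' : Fin p) → Fin (r j') → (i' : Fin p) → Fin (r i' - 1) → ℝ),
        ∑ i' ∈ Finset.univ.erase j, ∑ t' : Fin (r i' - 1),
          (if (t' : ℕ) + 1 = (x i' : ℕ) then (1:ℝ) else 0) * γ j m i' t'
        = γ j m i t := by
      intro γ
      have hmem : i ∈ Finset.univ.erase j := Finset.mem_erase.mpr ⟨hij, Finset.mem_univ i⟩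
      have houter : (∑ i' ∈ Finset.univ.erase j, ∑ t' : Fin (r i' - 1),
          (if (t' : ℕ) + 1 = (x i' : ℕ) then (1:ℝ) else 0) * γ j m i' t')
          = ∑ t' : Fin (r i - 1),
            (if (t' : ℕ) + 1 = (x i : ℕ) then (1:ℝ) else 0) * γ j m i t' := by
        refine Finset.sum_eq_single_of_mem i hmem fun i' _ hne => ?_
        have hxi' : (x i' : ℕ) = 0 := by rw [hx, Function.update_of_ne hne]
        refine Finset.sum_eq_zero fun t' _ => ?_
        rw [hxi']
        simp
      rw [houter]
      have hinner : (∑ t' : Fin (r i - 1),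
          (if (t' : ℕ) + 1 = (x i : ℕ) then (1:ℝ) else 0) * γ j m i t')
          = (if (t : ℕ) + 1 = (x i : ℕ) then (1:ℝ) else 0) * γ j m i t := by
        refine Finset.sum_eq_single_of_mem t (Finset.mem_univ t) fun t' _ hne => ?_
        rw [hxi]
        have hcc : ¬((t' : ℕ) + 1 = (t : ℕ) + 1) := fun hc => hne (Fin.ext (by omega))
        simp [hcc]
        intro hc; exact absurd (Fin.ext hc) hne
      rw [hinner, hxi]
      simp
    rw [heval β, heval βs] at h10
    exact h10
end
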